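/- Let n ≥ 2 and d ≥ 1, and let φ be a ℂ-algebra automorphism of the invariant ring ℂ[x_1,…,x_n]^{μ_d}. Then for each i ∈ {1,…,n} there exists a polynomial q_i ∈ ℂ[x_1,…,x_n] such that φ(x_i^d) = q_i^d, i.e. φ(x_i^d) is a d-th power in ℂ[x_1,…,x_n]. -/

import Mathlib

open MvPolynomial

/-- The action of a scalar `ζ` on `ℂ[x_1,…,x_n]` scaling all variables simultaneously,
`f ↦ f(ζx_1,…,ζx_n)`. -/
noncomputable def scaleAct (n : ℕ) (ζ : ℂ) :
    MvPolynomial (Fin n) ℂ →ₐ[ℂ] MvPolynomial (Fin n) ℂ :=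
  aeval (fun i => C ζ * X i)

/-- The invariant ring `R = ℂ[x_1,…,x_n]^{μ_d}`. -/
noncomputable def invRing (n d : ℕ) : Subalgebra ℂ (MvPolynomial (Fin n) ℂ) where
  carrier := {f | ∀ ζ : ℂ, ζ ^ d = 1 → scaleAct n ζ f = f}
  mul_mem' := fun hf hg ζ hζ => by rw [map_mul, hf ζ hζ, hg ζ hζ]
  add_mem' := fun hf hg ζ hζ => by rw [map_add, hf ζ hζ, hg ζ hζ]
  algebraMap_mem' := fun c ζ hζ => (scaleAct n ζ).commutes c

theorem X_pow_mem (n d : ℕ) (i : Fin n) :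
    (X i : MvPolynomial (Fin n) ℂ) ^ d ∈ invRing n d := by
  intro ζ hζ
  simp [scaleAct, mul_pow, ← C_pow, hζ]

section Aux

variable {n d : ℕ}

lemma mem_invRing_iff {f : MvPolynomial (Fin n) ℂ} :
    f ∈ invRing n d ↔ ∀ ζ : ℂ, ζ ^ d = 1 → scaleAct n ζ f = f := Iff.rfl

lemma scaleAct_scaleAct (ζ ξ : ℂ) (p : MvPolynomial (Fin n) ℂ) :
    scaleAct n ζ (scaleAct n ξ p) = scaleAct n (ζ * ξ) p := by
  have h : (scaleAct n ζ).comp (scaleAct n ξ) = scaleAct n (ζ * ξ) := by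
    apply algHom_ext
    intro k
    simp [scaleAct]
    ring
  exact DFunLike.congr_fun h p

lemma scaleAct_one_apply (p : MvPolynomial (Fin n) ℂ) : scaleAct n 1 p = p := by
  have h : scaleAct n (1 : ℂ) = AlgHom.id ℂ (MvPolynomial (Fin n) ℂ) := by
    apply algHom_ext; intro k; simp [scaleAct]
  rw [h]; rfl

/-- `scaleAct` by a nonzero scalar as an algebra equivalence. -/
noncomputable def scaleEquiv (n : ℕ) (ζ : ℂ) (hζ : ζ ≠ 0) :
    MvPolynomial (Fin n) ℂ ≃ₐ[ℂ] MvPolynomial (Fin n) ℂ :=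
  AlgEquiv.ofAlgHom (scaleAct n ζ) (scaleAct n ζ⁻¹)
    (by
      apply AlgHom.ext; intro p
      simp only [AlgHom.coe_comp, Function.comp_apply, AlgHom.coe_id, id_eq]
      rw [scaleAct_scaleAct, mul_inv_cancel₀ hζ, scaleAct_one_apply])
    (by
      apply AlgHom.ext; intro p
      simp only [AlgHom.coe_comp, Function.comp_apply, AlgHom.coe_id, id_eq]
      rw [scaleAct_scaleAct, inv_mul_cancel₀ hζ, scaleAct_one_apply])

lemma scaleEquiv_apply (n : ℕ) (ζ : ℂ) (hζ : ζ ≠ 0) (p : MvPolynomial (Fin n) ℂ) :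
    scaleEquiv n ζ hζ p = scaleAct n ζ p := rfl

lemma prime_scaleAct {ζ : ℂ} (hζ : ζ ≠ 0) {r : MvPolynomial (Fin n) ℂ} (hr : Prime r) :
    Prime (scaleAct n ζ r) :=
  (MulEquiv.prime_iff (scaleEquiv n ζ hζ).toMulEquiv).mpr hr

lemma prime_X_mv (i : Fin n) : Prime (X i : MvPolynomial (Fin n) ℂ) := by
  cases n with
  | zero => exact i.elim0
  | succ m =>
    have h0 : Prime (X (0 : Fin (m + 1)) : MvPolynomial (Fin (m + 1)) ℂ) := by
      rw [← MulEquiv.prime_iff (finSuccEquiv ℂ m).toMulEquiv]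
      have : (finSuccEquiv ℂ m).toMulEquiv (X 0) = Polynomial.X := finSuccEquiv_X_zero
      rw [this]
      exact Polynomial.prime_X
    rw [← MulEquiv.prime_iff (renameEquiv ℂ (Equiv.swap i 0)).toMulEquiv]
    have : (renameEquiv ℂ (Equiv.swap i 0)).toMulEquiv (X i)
        = (X (0 : Fin (m+1)) : MvPolynomial (Fin (m+1)) ℂ) := by
      show renameEquiv ℂ (Equiv.swap i 0) (X i) = _
      simp [renameEquiv, Equiv.swap_apply_left]
    rw [this]
    exact h0

lemma unit_eq_C : ∀ {N : ℕ} (w : MvPolynomial (Fin N) ℂ), IsUnit w → ∃ c : ℂ, w = C c := by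
  intro N
  induction N with
  | zero =>
    intro w _
    exact ⟨constantCoeff w, (eq_C_of_isEmpty w)⟩
  | succ m ih =>
    intro w hw
    have hw' : IsUnit (finSuccEquiv ℂ m w) := hw.map _
    have hdeg : (finSuccEquiv ℂ m w).degree = 0 := Polynomial.degree_eq_zero_of_isUnit hw'
    have heq : finSuccEquiv ℂ m w = Polynomial.C ((finSuccEquiv ℂ m w).coeff 0) :=
      Polynomial.eq_C_of_degree_le_zero (le_of_eq hdeg)
    have hu : IsUnit ((finSuccEquiv ℂ m w).coeff 0) := by
      rw [heq] at hw'
      exact Polynomial.isUnit_C.mp hw'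
    obtain ⟨c, hc⟩ := ih _ hu
    refine ⟨c, ?_⟩
    apply (finSuccEquiv ℂ m).injective
    rw [heq, hc]
    have : (finSuccEquiv ℂ m) (C c : MvPolynomial (Fin (m+1)) ℂ) = Polynomial.C (C c) := by
      simp [finSuccEquiv_apply]
    rw [this]

lemma ne_zero_of_pow_eq_one {ζ : ℂ} (hd : 1 ≤ d) (hζ : ζ ^ d = 1) : (ζ : ℂ) ≠ 0 := by
  intro h
  rw [h, zero_pow (by omega : d ≠ 0)] at hζ
  exact zero_ne_one hζ

end Aux

/-- the finset of d-th roots of unity in ℂ -/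
noncomputable def muF (d : ℕ) : Finset ℂ := (Polynomial.nthRoots d (1 : ℂ)).toFinset

/-- product over the group of scaled copies -/
noncomputable def piProd (n d : ℕ) (p : MvPolynomial (Fin n) ℂ) : MvPolynomial (Fin n) ℂ :=
  ∏ ζ ∈ muF d, scaleAct n ζ p

section C
variable {n d : ℕ}

lemma mem_muF (hd : 1 ≤ d) {ζ : ℂ} : ζ ∈ muF d ↔ ζ ^ d = 1 := by
  rw [muF, Multiset.mem_toFinset, Polynomial.mem_nthRoots (by omega)]

lemma one_mem_muF (hd : 1 ≤ d) : (1 : ℂ) ∈ muF d := (mem_muF hd).mpr (one_pow d)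

lemma piProd_mul (p q : MvPolynomial (Fin n) ℂ) :
    piProd n d (p * q) = piProd n d p * piProd n d q := by
  simp [piProd, map_mul, Finset.prod_mul_distrib]

lemma dvd_piProd (hd : 1 ≤ d) (p : MvPolynomial (Fin n) ℂ) : p ∣ piProd n d p := by
  have h := Finset.dvd_prod_of_mem (fun ζ => scaleAct n ζ p) (one_mem_muF (d := d) hd)
  rw [piProd]
  simpa [scaleAct_one_apply] using h

lemma isUnit_piProd {v : MvPolynomial (Fin n) ℂ} (hv : IsUnit v) :
    IsUnit (piProd n d v) := by
  obtain ⟨w, rfl⟩ := hv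
  apply IsUnit.of_mul_eq_one (piProd n d (↑w⁻¹))
  rw [← piProd_mul]
  have : ((w : MvPolynomial (Fin n) ℂ) * ↑w⁻¹) = 1 := w.mul_inv
  rw [this]
  simp [piProd]

lemma piProd_mem_invRing (hd : 1 ≤ d) (p : MvPolynomial (Fin n) ℂ) :
    piProd n d p ∈ invRing n d := by
  intro ξ hξ
  have hξ0 : ξ ≠ 0 := ne_zero_of_pow_eq_one hd hξ
  rw [piProd, map_prod]
  simp only [scaleAct_scaleAct]
  apply Finset.prod_nbij' (fun ζ => ξ * ζ) (fun ζ => ξ⁻¹ * ζ)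
  · intro ζ hζ
    rw [mem_muF hd] at hζ ⊢
    rw [mul_pow, hξ, hζ, one_mul]
  · intro ζ hζ
    rw [mem_muF hd] at hζ ⊢
    rw [mul_pow, inv_pow, hξ, hζ, inv_one, one_mul]
  · intro ζ _; rw [← mul_assoc, inv_mul_cancel₀ hξ0, one_mul]
  · intro ζ _; rw [← mul_assoc, mul_inv_cancel₀ hξ0, one_mul]
  · intro ζ _; rfl

end C

section D
variable {n d : ℕ}

lemma dvd_lift {f a : MvPolynomial (Fin n) ℂ} (hfR : f ∈ invRing n d) (hf0 : f ≠ 0)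
    (haR : a ∈ invRing n d) (h : f ∣ a) :
    ∃ s, s ∈ invRing n d ∧ a = f * s := by
  obtain ⟨s, rfl⟩ := h
  refine ⟨s, fun ζ hζ => ?_, rfl⟩
  have h1 := haR ζ hζ
  rw [map_mul, hfR ζ hζ] at h1
  exact mul_left_cancel₀ hf0 h1

lemma single_orbit (hd : 1 ≤ d) {f : MvPolynomial (Fin n) ℂ} (hf0 : f ≠ 0)
    (hfR : f ∈ invRing n d)
    (hP : ∀ a b : MvPolynomial (Fin n) ℂ, a ∈ invRing n d → b ∈ invRing n d → f ∣ a * b →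
      (∃ m, f ∣ a ^ m) ∨ (∃ m, f ∣ b ^ m))
    {r r' : MvPolynomial (Fin n) ℂ} (hr : Prime r) (hr' : Prime r')
    (hrf : r ∣ f) (hr'f : r' ∣ f) :
    ∃ ζ : ℂ, ζ ^ d = 1 ∧ Associated (scaleAct n ζ r) r' := by
  classical
  set M := UniqueFactorizationMonoid.factors f with hM
  obtain ⟨v, hv⟩ := UniqueFactorizationMonoid.factors_prod hf0
  set pred := fun x : MvPolynomial (Fin n) ℂ =>
    ∃ ζ : ℂ, ζ ^ d = 1 ∧ Associated (scaleAct n ζ r) x with hpred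
  set M₁ := M.filter pred with hM₁
  set M₂ := M.filter (fun x => ¬ pred x) with hM₂
  have hMsplit : M₁ + M₂ = M := Multiset.filter_add_not pred M
  have hprodsplit : M₁.prod * M₂.prod = M.prod := by rw [← Multiset.prod_add, hMsplit]
  have hfN : piProd n d f = f ^ (muF d).card := by
    rw [piProd, Finset.prod_congr rfl fun ζ hζ => hfR ζ ((mem_muF hd).mp hζ),
      Finset.prod_const]
  set A := piProd n d (M₁.prod) with hA
  set B := piProd n d (M₂.prod) with hB
  set W := piProd n d (↑v) with hW
  have hfactor : f ^ (muF d).card = (A * W) * B := by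
    rw [← hfN, ← hv, ← hprodsplit]
    rw [piProd_mul, piProd_mul]
    ring
  have hcard : (muF d).card ≠ 0 :=
    Finset.card_ne_zero_of_mem (one_mem_muF hd)
  have hdvd : f ∣ (A * W) * B := by
    rw [← hfactor]; exact dvd_pow_self f hcard
  have hAWmem : A * W ∈ invRing n d :=
    mul_mem (piProd_mem_invRing hd _) (piProd_mem_invRing hd _)
  have hBmem : B ∈ invRing n d := piProd_mem_invRing hd _
  have hWu : IsUnit W := isUnit_piProd v.isUnit
  -- helper: from a prime p dividing `piProd n d s`, extract a factor
  have extract : ∀ (p s : MvPolynomial (Fin n) ℂ), Prime p → p ∣ piProd n d s →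
      ∃ ζ : ℂ, ζ ^ d = 1 ∧ scaleAct n ζ p ∣ s ∧ Prime (scaleAct n ζ p) := by
    intro p s hp hps
    obtain ⟨ζ, hζmem, hζdvd⟩ := hp.exists_mem_finset_dvd hps
    have hζ1 : ζ ^ d = 1 := (mem_muF hd).mp hζmem
    have hζ0 : ζ ≠ 0 := ne_zero_of_pow_eq_one hd hζ1
    have hζi0 : ζ⁻¹ ≠ 0 := inv_ne_zero hζ0
    refine ⟨ζ⁻¹, by rw [inv_pow, hζ1, inv_one], ?_, prime_scaleAct hζi0 hp⟩
    have := map_dvd (scaleAct n ζ⁻¹) hζdvd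
    rwa [scaleAct_scaleAct, inv_mul_cancel₀ hζ0, scaleAct_one_apply] at this
  rcases hP _ _ hAWmem hBmem hdvd with ⟨m, hm⟩ | ⟨m, hm⟩
  · -- r' divides (A*W)^m, trace it into M₁
    have hr'AW : r' ∣ (A * W) ^ m := dvd_trans hr'f hm
    rw [mul_pow] at hr'AW
    rcases hr'.dvd_or_dvd hr'AW with hc | hc
    swap
    · exact absurd (isUnit_of_dvd_unit hc (hWu.pow m)) hr'.not_unit
    have hr'A : r' ∣ A := hr'.dvd_of_dvd_pow hc
    obtain ⟨ζ, hζ1, hζdvd, hζpr⟩ := extract r' _ hr' hr'A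
    obtain ⟨x, hxM₁, hxdvd⟩ := hζpr.exists_mem_multiset_dvd hζdvd
    have hxM : x ∈ M := Multiset.mem_of_mem_filter hxM₁
    have hxprime : Prime x := UniqueFactorizationMonoid.prime_of_factor x hxM
    have hassoc1 : Associated (scaleAct n ζ r') x := hζpr.associated_of_dvd hxprime hxdvd
    obtain ⟨ξ, hξ1, hassoc2⟩ := (Multiset.mem_filter.mp hxM₁).2
    -- Associated (scaleAct ξ r) (scaleAct ζ r'); apply scaleAct ζ⁻¹
    have hζ0 : ζ ≠ 0 := ne_zero_of_pow_eq_one hd hζ1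
    have hfin : Associated (scaleAct n (ζ⁻¹ * ξ) r) r' := by
      have h3 : Associated (scaleAct n ξ r) (scaleAct n ζ r') :=
        hassoc2.trans hassoc1.symm
      have h4 := h3.map (scaleAct n ζ⁻¹)
      rwa [scaleAct_scaleAct, scaleAct_scaleAct, inv_mul_cancel₀ hζ0,
        scaleAct_one_apply] at h4
    exact ⟨ζ⁻¹ * ξ, by rw [mul_pow, inv_pow, hζ1, hξ1, inv_one, one_mul], hfin⟩
  · -- r divides B^m : contradiction
    exfalso
    have hrB : r ∣ B := hr.dvd_of_dvd_pow (dvd_trans hrf hm)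
    obtain ⟨ζ, hζ1, hζdvd, hζpr⟩ := extract r _ hr hrB
    obtain ⟨x, hxM₂, hxdvd⟩ := hζpr.exists_mem_multiset_dvd hζdvd
    have hxM : x ∈ M := Multiset.mem_of_mem_filter hxM₂
    have hxprime : Prime x := UniqueFactorizationMonoid.prime_of_factor x hxM
    exact (Multiset.mem_filter.mp hxM₂).2 ⟨ζ, hζ1, hζpr.associated_of_dvd hxprime hxdvd⟩

end D

lemma prod_dvd_pow_card {α : Type*} [CommMonoid α] (M : Multiset α) (u : α)
    (h : ∀ x ∈ M, x ∣ u) : M.prod ∣ u ^ Multiset.card M := by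
  induction M using Multiset.induction_on with
  | empty => simp
  | cons a s ih =>
    rw [Multiset.prod_cons, Multiset.card_cons, pow_succ]
    exact mul_comm a s.prod ▸ mul_dvd_mul (ih fun x hx => h x (Multiset.mem_cons_of_mem hx))
      (h a (Multiset.mem_cons_self a s))

/-- for a `ℂ`-algebra automorphism `φ` of `ℂ[x_1,…,x_n]^{μ_d}` and each `i`,
`φ(x_i^d)` is a `d`-th power in `ℂ[x_1,…,x_n]`. -/
theorem dth_power_of_invRing_automorphism (n d : ℕ) (hn : 2 ≤ n) (hd : 1 ≤ d)
    (φ : invRing n d ≃ₐ[ℂ] invRing n d) (i : Fin n) :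
    ∃ q : MvPolynomial (Fin n) ℂ,
      (φ ⟨X i ^ d, X_pow_mem n d i⟩ : MvPolynomial (Fin n) ℂ) = q ^ d := by
  classical
  -- pick an index different from i
  obtain ⟨j, hij⟩ : ∃ j : Fin n, j ≠ i := by
    haveI : Nontrivial (Fin n) := Fin.nontrivial_iff_two_le.mpr hn
    exact exists_ne i
  have hd0 : d ≠ 0 := by omega
  have hXj_mem : (X i * X j ^ (d - 1) : MvPolynomial (Fin n) ℂ) ∈ invRing n d := by
    intro ζ hζ
    have hζd : ζ * ζ ^ (d - 1) = 1 := by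
      rw [← pow_succ']
      rw [Nat.sub_add_cancel hd]
      exact hζ
    have hX : ∀ k : Fin n, scaleAct n ζ (X k) = C ζ * X k := by
      intro k; simp [scaleAct]
    rw [map_mul, map_pow, hX, hX, mul_pow, ← C_pow]
    calc C ζ * X i * (C (ζ ^ (d-1)) * X j ^ (d-1))
        = C (ζ * ζ ^ (d-1)) * (X i * X j ^ (d-1)) := by rw [map_mul]; ring
      _ = X i * X j ^ (d - 1) := by rw [hζd, map_one, one_mul]
  set p_i : invRing n d := ⟨X i ^ d, X_pow_mem n d i⟩ with hp_i
  set p_j : invRing n d := ⟨X j ^ d, X_pow_mem n d j⟩ with hp_j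
  set p_ij : invRing n d := ⟨X i * X j ^ (d - 1), hXj_mem⟩ with hp_ij
  set f : MvPolynomial (Fin n) ℂ := (φ p_i : MvPolynomial (Fin n) ℂ) with hf
  set u : MvPolynomial (Fin n) ℂ := (φ p_j : MvPolynomial (Fin n) ℂ) with hu
  set t : MvPolynomial (Fin n) ℂ := (φ p_ij : MvPolynomial (Fin n) ℂ) with ht
  have hXd0 : (X i ^ d : MvPolynomial (Fin n) ℂ) ≠ 0 := pow_ne_zero d (X_ne_zero i)
  have hfR : f ∈ invRing n d := (φ p_i).2
  have huR : u ∈ invRing n d := (φ p_j).2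
  have hf0 : f ≠ 0 := by
    intro h0
    have : φ p_i = 0 := Subtype.ext h0
    have : p_i = 0 := by
      have := congrArg φ.symm this
      rwa [AlgEquiv.symm_apply_apply, map_zero] at this
    exact hXd0 (congrArg (Subtype.val) this)
  -- the key transport lemma
  have key : ∀ a : invRing n d,
      f ∣ (a : MvPolynomial (Fin n) ℂ) ↔
      (X i) ^ d ∣ ((φ.symm a : invRing n d) : MvPolynomial (Fin n) ℂ) := by
    intro a
    constructor
    · intro hdvd
      obtain ⟨s, hsR, hseq⟩ := dvd_lift hfR hf0 a.2 hdvd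
      have ha : a = φ p_i * ⟨s, hsR⟩ := Subtype.ext hseq
      have := congrArg φ.symm ha
      rw [map_mul, AlgEquiv.symm_apply_apply] at this
      exact ⟨_, congrArg (Subtype.val) this⟩
    · intro hdvd
      obtain ⟨s, hsR, hseq⟩ := dvd_lift (X_pow_mem n d i) hXd0 (φ.symm a).2 hdvd
      have ha : φ.symm a = p_i * ⟨s, hsR⟩ := Subtype.ext hseq
      have := congrArg φ ha
      rw [map_mul, AlgEquiv.apply_symm_apply] at this
      exact ⟨_, congrArg (Subtype.val) this⟩
  -- primality transport
  have hPrim : ∀ a b : MvPolynomial (Fin n) ℂ, a ∈ invRing n d → b ∈ invRing n d →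
      f ∣ a * b → (∃ m, f ∣ a ^ m) ∨ (∃ m, f ∣ b ^ m) := by
    intro a b ha hb hab
    have h1 := (key (⟨a, ha⟩ * ⟨b, hb⟩)).mp (by rw [Subalgebra.coe_mul]; exact hab)
    rw [map_mul] at h1
    have h2 : X i ∣ ((φ.symm ⟨a, ha⟩ : invRing n d) : MvPolynomial (Fin n) ℂ) *
        ((φ.symm ⟨b, hb⟩ : invRing n d) : MvPolynomial (Fin n) ℂ) :=
      dvd_trans (dvd_pow_self (X i) hd0) h1
    rcases (prime_X_mv i).dvd_or_dvd h2 with hc | hc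
    · left
      refine ⟨d, ?_⟩
      have h3 : (X i) ^ d ∣ ((φ.symm (⟨a, ha⟩ ^ d) : invRing n d) : MvPolynomial (Fin n) ℂ) := by
        rw [map_pow]
        exact pow_dvd_pow_of_dvd hc d
      have := (key (⟨a, ha⟩ ^ d)).mpr h3
      simpa using this
    · right
      refine ⟨d, ?_⟩
      have h3 : (X i) ^ d ∣ ((φ.symm (⟨b, hb⟩ ^ d) : invRing n d) : MvPolynomial (Fin n) ℂ) := by
        rw [map_pow]
        exact pow_dvd_pow_of_dvd hc d
      have := (key (⟨b, hb⟩ ^ d)).mpr h3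
      simpa using this
  -- f does not divide any power of u
  have hnotdvdu : ¬ ∃ m, f ∣ u ^ m := by
    rintro ⟨m, hm⟩
    have h1 : f ∣ ((φ p_j ^ m : invRing n d) : MvPolynomial (Fin n) ℂ) := by simpa using hm
    have h2 := (key (φ p_j ^ m)).mp h1
    rw [← map_pow, AlgEquiv.symm_apply_apply] at h2
    have h3 : ((p_j ^ m : invRing n d) : MvPolynomial (Fin n) ℂ) = X j ^ (d * m) := by
      rw [hp_j]
      push_cast
      rw [← pow_mul]
    rw [h3] at h2
    have h4 : X i ∣ (X j : MvPolynomial (Fin n) ℂ) ^ (d * m) :=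
      dvd_trans (dvd_pow_self (X i) hd0) h2
    have h5 : (X i : MvPolynomial (Fin n) ℂ) ∣ X j := (prime_X_mv i).dvd_of_dvd_pow h4
    have h6 := map_dvd (eval (fun k : Fin n => if k = i then (0 : ℂ) else 1)) h5
    simp [hij] at h6
  -- the transported relation t^d = f * u^(d-1)
  have hrel : t ^ d = f * u ^ (d - 1) := by
    have e1 : p_ij ^ d = p_i * p_j ^ (d - 1) := by
      apply Subtype.ext
      push_cast
      rw [mul_pow, ← pow_mul, ← pow_mul, Nat.mul_comm]
    have e2 := congrArg φ e1
    rw [map_pow, map_mul, map_pow] at e2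
    have := congrArg (Subtype.val) e2
    push_cast at this
    simpa using this
  -- no prime divides both f and u
  have keyfact : ∀ r : MvPolynomial (Fin n) ℂ, Prime r → r ∣ f → r ∣ u → False := by
    intro r hrp hrf hru
    apply hnotdvdu
    set M := UniqueFactorizationMonoid.factors f with hM
    have hall : ∀ x ∈ M, x ∣ u := by
      intro x hx
      have hxp : Prime x := UniqueFactorizationMonoid.prime_of_factor x hx
      have hxf : x ∣ f :=
        (Multiset.dvd_prod hx).trans (UniqueFactorizationMonoid.factors_prod hf0).dvd
      obtain ⟨ζ, hζ1, hassoc⟩ := single_orbit hd hf0 hfR hPrim hrp hxp hrf hxf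
      have hσ : scaleAct n ζ r ∣ scaleAct n ζ u := map_dvd _ hru
      rw [huR ζ hζ1] at hσ
      exact hassoc.symm.dvd.trans hσ
    have h1 : M.prod ∣ u ^ Multiset.card M := prod_dvd_pow_card M u hall
    exact ⟨_, (UniqueFactorizationMonoid.factors_prod hf0).symm.dvd.trans h1⟩
  -- conclude via gcd and the power lemma
  letI : GCDMonoid (MvPolynomial (Fin n) ℂ) :=
    UniqueFactorizationMonoid.toGCDMonoid (MvPolynomial (Fin n) ℂ)
  have hgcd : IsUnit (gcd f (u ^ (d - 1))) := by
    by_contra hng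
    have hg0 : gcd f (u ^ (d - 1)) ≠ 0 := fun h0 => hf0 ((gcd_eq_zero_iff _ _).mp h0).1
    obtain ⟨q, hqirr, hqdvd⟩ := WfDvdMonoid.exists_irreducible_factor hng hg0
    have hqp : Prime q := UniqueFactorizationMonoid.irreducible_iff_prime.mp hqirr
    have hqf : q ∣ f := hqdvd.trans (gcd_dvd_left _ _)
    have hqu : q ∣ u := hqp.dvd_of_dvd_pow (hqdvd.trans (gcd_dvd_right _ _))
    exact keyfact q hqp hqf hqu
  obtain ⟨q₀, hq₀⟩ := exists_associated_pow_of_mul_eq_pow hgcd hrel.symm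
  obtain ⟨w, hw⟩ := hq₀
  obtain ⟨c, hc⟩ := unit_eq_C (N := n) (↑w) w.isUnit
  obtain ⟨δ, hδ⟩ := IsAlgClosed.exists_pow_nat_eq c (by omega : 0 < d)
  refine ⟨C δ * q₀, ?_⟩
  show f = (C δ * q₀) ^ d
  rw [mul_pow, ← C_pow, hδ, ← hc, ← hw]
  ring
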